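/- Let p = u² + 64 be prime with u ≡ 1 (mod 4), M a squarefree odd integer prime to p, and consider the homogeneous space C_d : d w² = 4p − ((M/d) z² − 2u)² for a squarefree divisor-class d of M. If q is an odd prime dividing M with q ∤ d and C_d has a ℚ_q-rational point, and q ≡ 1 (mod 4), then d is a square modulo q. -/

import Mathlib

private lemma sq_helper {F : Type*} [Field F] {d W c B : F} (hW : W ≠ 0)
    (hc : IsSquare c) (h : d * W ^ 2 = c * B ^ 2) : IsSquare d := by
  obtain ⟨s, rfl⟩ := hc
  refine ⟨s * B / W, ?_⟩
  field_simp
  linear_combination h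

private lemma toZMod_ne_zero {q : ℕ} [Fact q.Prime] {x : ℤ_[q]} (hx : ‖x‖ = 1) :
    PadicInt.toZMod x ≠ 0 := by
  intro h
  have hmem : x ∈ IsLocalRing.maximalIdeal ℤ_[q] := by
    rw [← PadicInt.ker_toZMod]; exact h
  rw [PadicInt.maximalIdeal_eq_span_p, Ideal.mem_span_singleton,
    ← PadicInt.norm_lt_one_iff_dvd] at hmem
  rw [hx] at hmem; exact lt_irrefl 1 hmem

private lemma padic_sub_le {q : ℕ} [Fact q.Prime] {a b : ℚ_[q]}
    (ha : ‖a‖ ≤ 1) (hb : ‖b‖ ≤ 1) : ‖a - b‖ ≤ 1 := by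
  rw [sub_eq_add_neg]
  refine le_trans (Padic.nonarchimedean _ _) ?_
  simp only [norm_neg, max_le_iff]
  exact ⟨ha, hb⟩

private lemma padic_int_le_one {q : ℕ} [Fact q.Prime] (k : ℤ) : ‖((k : ℤ) : ℚ_[q])‖ ≤ 1 :=
  Padic.norm_int_le_one k


/-- let `p = u² + 64` be prime, `M` squarefree odd and prime to `p`, and
`C_d : d w² = 4p - ((M/d) z² - 2u)²` the homogeneous space attached to a divisor `d` of `M`.
If `q` is an odd prime dividing `M` with `q ∤ d` and `q ≡ 1 (mod 4)`, and `C_d` has a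
`ℚ_q`-rational point, then `d` is a square modulo `q`. -/
theorem stmt_11 (u M d : ℤ) (hp : Prime (u ^ 2 + 64))
    (hModd : Odd M) (hMsq : Squarefree M) (hMp : IsCoprime M (u ^ 2 + 64))
    (hdM : d ∣ M)
    (q : ℕ) [Fact q.Prime] (hqodd : Odd q) (hq1 : q % 4 = 1)
    (hqM : (q : ℤ) ∣ M) (hqd : ¬ ((q : ℤ) ∣ d))
    (hpt : ∃ w z : ℚ_[q], (d : ℚ_[q]) * w ^ 2 =
      4 * ((u : ℚ_[q]) ^ 2 + 64) - (((M / d : ℤ) : ℚ_[q]) * z ^ 2 - 2 * (u : ℚ_[q])) ^ 2) :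
    IsSquare ((d : ZMod q)) := by
  obtain ⟨w, z, hwz⟩ := hpt
  set e : ℤ := M / d with he_def
  have hde : d * e = M := Int.mul_ediv_cancel' hdM
  have hqprime : Prime (q : ℤ) := Nat.prime_iff_prime_int.mp Fact.out
  have hqe : (q : ℤ) ∣ e := by
    rcases hqprime.dvd_mul.mp (hde ▸ hqM) with h | h
    · exact absurd h hqd
    · exact h
  set e' : ℤ := e / q with he'_def
  have hee' : e = q * e' := (Int.mul_ediv_cancel' hqe).symm
  have hqe' : ¬ (q : ℤ) ∣ e' := by
    intro h
    obtain ⟨c, hc⟩ := h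
    have : (q : ℤ) * (q : ℤ) ∣ M := ⟨d * c, by rw [← hde, hee', hc]; ring⟩
    exact hqprime.not_isUnit (hMsq _ this)
  have hq2 : q ≠ 2 := by rintro rfl; exact (by norm_num : ¬ Odd 2) hqodd
  have h16 : (16 : ZMod q) ≠ 0 := by
    intro h
    have h16' : ((16 : ℕ) : ZMod q) = 0 := by exact_mod_cast h
    rw [ZMod.natCast_eq_zero_iff] at h16'
    have h24 : q ∣ 2 ^ 4 := (by norm_num : (16:ℕ) = 2 ^ 4) ▸ h16'
    have h2 : q ∣ 2 := (Fact.out : q.Prime).dvd_of_dvd_pow h24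
    exact hq2 ((Nat.prime_dvd_prime_iff_eq (Fact.out : q.Prime) Nat.prime_two).mp h2)
  have hd1 : ‖(d : ℚ_[q])‖ = 1 := by
    rcases lt_or_eq_of_le (Padic.norm_int_le_one (p := q) d) with h' | h'
    · exact absurd ((Padic.norm_intCast_lt_one_iff (k := d)).mp h') hqd
    · exact h'
  have he0 : ((e : ℤ) : ZMod q) = 0 := by
    rwa [ZMod.intCast_zmod_eq_zero_iff_dvd]
  by_cases hz : ‖z‖ ≤ 1
  · -- integral case: reduce mod q, get d * w² ≡ 256
    have hble : ‖(e : ℚ_[q]) * z ^ 2 - 2 * (u : ℚ_[q])‖ ≤ 1 := by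
      refine padic_sub_le ?_ ?_
      · rw [norm_mul, norm_pow]
        exact mul_le_one₀ (padic_int_le_one e) (by positivity)
          (pow_le_one₀ (norm_nonneg _) hz)
      · have : (2 : ℚ_[q]) * (u : ℚ_[q]) = ((2 * u : ℤ) : ℚ_[q]) := by push_cast; ring
        rw [this]; exact padic_int_le_one _
    have hrhs : ‖(4 : ℚ_[q]) * ((u : ℚ_[q]) ^ 2 + 64) -
        ((e : ℚ_[q]) * z ^ 2 - 2 * (u : ℚ_[q])) ^ 2‖ ≤ 1 := by
      refine padic_sub_le ?_ ?_
      · have : (4 : ℚ_[q]) * ((u : ℚ_[q]) ^ 2 + 64) = ((4 * (u ^ 2 + 64) : ℤ) : ℚ_[q]) := by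
          push_cast; ring
        rw [this]; exact padic_int_le_one _
      · rw [norm_pow]; exact pow_le_one₀ (norm_nonneg _) hble
    have hwle : ‖w‖ ≤ 1 := by
      have h1 : ‖(d : ℚ_[q])‖ * ‖w‖ ^ 2 ≤ 1 := by
        rw [← norm_pow, ← norm_mul, hwz]; exact hrhs
      rw [hd1, one_mul] at h1
      nlinarith [norm_nonneg w]
    set w₀ : ℤ_[q] := ⟨w, hwle⟩ with hw₀
    set z₀ : ℤ_[q] := ⟨z, hz⟩ with hz₀
    have hZ : (d : ℤ_[q]) * w₀ ^ 2 =
        4 * ((u : ℤ_[q]) ^ 2 + 64) - ((e : ℤ_[q]) * z₀ ^ 2 - 2 * (u : ℤ_[q])) ^ 2 := by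
      apply Subtype.coe_injective
      push_cast
      exact hwz
    have hmap := congrArg PadicInt.toZMod hZ
    simp only [map_mul, map_pow, map_sub, map_add, map_intCast, map_ofNat] at hmap
    rw [he0] at hmap
    set W : ZMod q := PadicInt.toZMod w₀ with hW
    have h2 : (d : ZMod q) * W ^ 2 = 256 * 1 ^ 2 := by linear_combination hmap
    have hWne : W ≠ 0 := by
      intro h
      rw [h] at h2
      have : (256 : ZMod q) = 0 := by linear_combination -h2
      exact h16 (by
        have h162 : (16 : ZMod q) ^ 2 = 0 := by rw [show (16:ZMod q)^2 = 256 by norm_num, this]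
        exact pow_eq_zero_iff two_ne_zero |>.mp h162)
    exact sq_helper hWne ⟨16, by norm_num⟩ h2
  · -- non-integral case
    have hz0 : z ≠ 0 := by rintro rfl; simp at hz
    have hn : z.valuation < 0 := by
      rw [Padic.norm_le_one_iff_val_nonneg] at hz; omega
    set n : ℤ := z.valuation with hn_def
    set k : ℕ := (-n).toNat with hk_def
    have hkn : (k : ℤ) = -n := Int.toNat_of_nonneg (by omega)
    have hk1 : 1 ≤ k := by omega
    set a : ℕ := 2 * k - 1 with ha_def
    have ha : 2 * k = a + 1 := by omega
    have ha1 : 1 ≤ a := by omega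
    set Q : ℚ_[q] := (q : ℚ_[q]) with hQ_def
    have hQR : (0:ℝ) < (q:ℝ) := by exact_mod_cast (Fact.out : q.Prime).pos
    set z' : ℚ_[q] := z * Q ^ k with hz'_def
    have hz'norm : ‖z'‖ = 1 := by
      rw [hz'_def, norm_mul, norm_pow, hQ_def, Padic.norm_p,
        Padic.norm_eq_zpow_neg_valuation hz0, inv_pow, ← zpow_natCast, ← zpow_neg, ← hn_def,
        ← zpow_add₀ (ne_of_gt hQR), hkn]
      norm_num
    have hz'le : ‖z'‖ ≤ 1 := le_of_eq hz'norm
    have hz'2 : z' ^ 2 = z ^ 2 * Q ^ a * Q := by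
      have h1 : z' ^ 2 = z ^ 2 * Q ^ (2 * k) := by rw [hz'_def]; ring
      rw [h1, ha, pow_succ]; ring
    have hE : ((e : ℤ) : ℚ_[q]) = Q * ((e' : ℤ) : ℚ_[q]) := by
      rw [hee']; push_cast [hQ_def]; ring
    rw [hE] at hwz
    have key : (d : ℚ_[q]) * (Q ^ a * w) ^ 2 =
        4 * ((u : ℚ_[q]) ^ 2 + 64) * (Q ^ a * Q ^ a) -
          (((e' : ℤ) : ℚ_[q]) * z' ^ 2 - 2 * (u : ℚ_[q]) * Q ^ a) ^ 2 := by
      rw [hz'2]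
      linear_combination (Q ^ a * Q ^ a) * hwz
    have hQle : ‖Q‖ ≤ 1 := by
      rw [hQ_def]
      exact le_of_eq_of_le (by exact_mod_cast rfl : ‖((q:ℤ) : ℚ_[q])‖ = ‖(q:ℚ_[q])‖).symm
        (padic_int_le_one q)
    have hQale : ‖Q ^ a‖ ≤ 1 := by rw [norm_pow]; exact pow_le_one₀ (norm_nonneg _) hQle
    have hBle : ‖((e' : ℤ) : ℚ_[q]) * z' ^ 2 - 2 * (u : ℚ_[q]) * Q ^ a‖ ≤ 1 := by
      refine padic_sub_le ?_ ?_
      · rw [norm_mul, norm_pow, hz'norm]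
        simpa using padic_int_le_one (q := q) e'
      · rw [show (2 : ℚ_[q]) * (u : ℚ_[q]) * Q ^ a = ((2 * u : ℤ) : ℚ_[q]) * Q ^ a
          by push_cast; ring, norm_mul]
        exact mul_le_one₀ (padic_int_le_one _) (norm_nonneg _) hQale
    have hWle : ‖Q ^ a * w‖ ≤ 1 := by
      have h1 : ‖(d : ℚ_[q]) * (Q ^ a * w) ^ 2‖ ≤ 1 := by
        rw [key]
        refine padic_sub_le ?_ ?_
        · rw [show (4 : ℚ_[q]) * ((u : ℚ_[q]) ^ 2 + 64) * (Q ^ a * Q ^ a)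
              = ((4 * (u ^ 2 + 64) : ℤ) : ℚ_[q]) * (Q ^ a * Q ^ a) by push_cast; ring,
            norm_mul, norm_mul]
          exact mul_le_one₀ (padic_int_le_one _) (by positivity)
            (mul_le_one₀ hQale (norm_nonneg _) hQale)
        · rw [norm_pow]; exact pow_le_one₀ (norm_nonneg _) hBle
      rw [norm_mul, hd1, one_mul, norm_pow] at h1
      nlinarith [norm_nonneg (Q ^ a * w)]
    set W₀ : ℤ_[q] := ⟨Q ^ a * w, hWle⟩ with hW₀
    set z'₀ : ℤ_[q] := ⟨z', hz'le⟩ with hz'₀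
    have hZ : (d : ℤ_[q]) * W₀ ^ 2 =
        4 * ((u : ℤ_[q]) ^ 2 + 64) * ((q : ℤ_[q]) ^ a * (q : ℤ_[q]) ^ a) -
          ((e' : ℤ_[q]) * z'₀ ^ 2 - 2 * (u : ℤ_[q]) * (q : ℤ_[q]) ^ a) ^ 2 := by
      apply Subtype.coe_injective
      push_cast
      exact key
    have hmap := congrArg PadicInt.toZMod hZ
    simp only [map_mul, map_pow, map_sub, map_add, map_intCast, map_natCast, map_ofNat,
      ZMod.natCast_self, zero_pow (show a ≠ 0 by omega), mul_zero, zero_mul, sub_zero,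
      zero_sub] at hmap
    set W : ZMod q := PadicInt.toZMod W₀ with hW
    set Y : ZMod q := PadicInt.toZMod z'₀ with hY
    have h2 : (d : ZMod q) * W ^ 2 = (-1) * ((e' : ZMod q) * Y ^ 2) ^ 2 := by
      linear_combination hmap
    have hYne : Y ≠ 0 := toZMod_ne_zero (by rw [PadicInt.norm_def]; exact hz'norm)
    have he'0 : ((e' : ℤ) : ZMod q) ≠ 0 := by
      rw [Ne, ZMod.intCast_zmod_eq_zero_iff_dvd]; exact hqe'
    have hBne : ((e' : ZMod q) * Y ^ 2) ≠ 0 := mul_ne_zero he'0 (pow_ne_zero _ hYne)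
    have hWne : W ≠ 0 := by
      intro h
      rw [h] at h2
      apply hBne
      have : ((e' : ZMod q) * Y ^ 2) ^ 2 = 0 := by linear_combination h2
      exact pow_eq_zero_iff two_ne_zero |>.mp this
    exact sq_helper hWne (ZMod.exists_sq_eq_neg_one_iff.mpr (by omega)) h2
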